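/- Let C be the Cantor-integer sequence for strictly increasing f : {0,...,m} → ℕ with f(0)=0, f(m)>m, and α = log(f(m)+1)/log(m+1). There exists k₁ ∈ ℕ such that for every n ≥ (m+1)^{k₁}, the finite sequence ε ↦ C((m+1)n+ε)/((m+1)n+ε)^α is strictly decreasing for ε ∈ {0,1,...,m}. -/

import Mathlib

def cantorC (m : ℕ) (f : ℕ → ℕ) (n : ℕ) : ℕ :=
  Nat.ofDigits (f m + 1) ((Nat.digits (m + 1) n).map f)

lemma cantorC_step (m : ℕ) (hm : 1 < m + 1) (f : ℕ → ℕ) (n ε : ℕ) (hn : 0 < n) (hε : ε ≤ m) :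
    cantorC m f ((m + 1) * n + ε) = f ε + (f m + 1) * cantorC m f n := by
  have hpos : 0 < (m + 1) * n + ε := Nat.add_pos_left (Nat.mul_pos (by omega) hn) _
  have h1 : ((m + 1) * n + ε) % (m + 1) = ε := by
    rw [Nat.mul_add_mod, Nat.mod_eq_of_lt (by omega)]
  have h2 : ((m + 1) * n + ε) / (m + 1) = n := by
    rw [Nat.mul_add_div (by omega), Nat.div_eq_of_lt (by omega)]
    omega
  unfold cantorC
  rw [Nat.digits_def' (by omega : 1 < m + 1) hpos, h1, h2, List.map_cons, Nat.ofDigits_cons]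

lemma cantorC_pos (m : ℕ) (hm : 1 < m + 1) (f : ℕ → ℕ) (hfpos : ∀ i, 1 ≤ i → i ≤ m → 0 < f i) :
    ∀ n, 0 < n → 0 < cantorC m f n := by
  intro n
  induction n using Nat.strong_induction_on with
  | _ n ih =>
    intro hn
    rcases lt_or_ge n (m + 1) with h | h
    · unfold cantorC
      rw [Nat.digits_def' (by omega : 1 < m + 1) hn, Nat.div_eq_of_lt h, Nat.digits_zero]
      simp only [List.map_cons, List.map_nil, Nat.ofDigits_cons, Nat.ofDigits_nil,
        Nat.mod_eq_of_lt h]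
      have := hfpos n hn (Nat.le_of_lt_succ h)
      omega
    · have hq : 0 < n / (m + 1) := Nat.div_pos h (by omega)
      have hstep := cantorC_step m hm f (n / (m + 1)) (n % (m + 1)) hq
        (Nat.le_of_lt_succ (Nat.mod_lt _ (by omega)))
      rw [Nat.div_add_mod] at hstep
      rw [hstep]
      have := ih (n / (m + 1)) (Nat.div_lt_self hn (by omega)) hq
      have h2 : 0 < (f m + 1) * cantorC m f (n / (m + 1)) := Nat.mul_pos (by omega) this
      exact Nat.lt_of_lt_of_le h2 (Nat.le_add_left _ _)

lemma cantorC_ge (m : ℕ) (hm : 1 < m + 1) (f : ℕ → ℕ) (hfpos : ∀ i, 1 ≤ i → i ≤ m → 0 < f i) :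
    ∀ k n, (m + 1) ^ k ≤ n → (f m + 1) ^ k ≤ cantorC m f n := by
  intro k
  induction k with
  | zero =>
    intro n h
    simpa [Nat.one_le_iff_ne_zero, Nat.pos_iff_ne_zero] using cantorC_pos m hm f hfpos n (by simp at h; omega)
  | succ k ih =>
    intro n h
    have hn : 0 < n := lt_of_lt_of_le (Nat.pow_pos (by omega)) h
    have hq0 : 0 < n / (m + 1) := Nat.div_pos (le_trans (Nat.le_self_pow (by omega) _) h) (by omega)
    have hq : (m + 1) ^ k ≤ n / (m + 1) := by
      rw [Nat.le_div_iff_mul_le (by omega)]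
      calc (m + 1) ^ k * (m + 1) = (m + 1) ^ (k + 1) := (pow_succ _ _).symm
        _ ≤ n := h
    have hstep := cantorC_step m hm f (n / (m + 1)) (n % (m + 1)) hq0
      (Nat.le_of_lt_succ (Nat.mod_lt _ (by omega)))
    rw [Nat.div_add_mod] at hstep
    rw [hstep, pow_succ]
    calc (f m + 1) ^ k * (f m + 1) ≤ cantorC m f (n / (m + 1)) * (f m + 1) :=
          Nat.mul_le_mul_right _ (ih _ hq)
      _ = (f m + 1) * cantorC m f (n / (m + 1)) := Nat.mul_comm _ _
      _ ≤ f (n % (m + 1)) + (f m + 1) * cantorC m f (n / (m + 1)) := Nat.le_add_left _ _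

lemma binom_aux (B k : ℕ) : B ^ (k + 1) + (k + 1) * B ^ k ≤ (B + 1) ^ (k + 1) := by
  induction k with
  | zero => simp [pow_succ]
  | succ k ih =>
    have h : (B + 1) ^ (k + 2) = (B + 1) * (B + 1) ^ (k + 1) := by ring
    calc B ^ (k + 2) + (k + 2) * B ^ (k + 1)
        ≤ (B + 1) * (B ^ (k + 1) + (k + 1) * B ^ k) := by
          have hexp : (B + 1) * (B ^ (k + 1) + (k + 1) * B ^ k) =
              B ^ (k + 2) + (k + 2) * B ^ (k + 1) + (k + 1) * B ^ k := by ring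
          rw [hexp]
          exact Nat.le_add_right _ _
      _ ≤ (B + 1) * (B + 1) ^ (k + 1) := Nat.mul_le_mul_left _ ih
      _ = (B + 1) ^ (k + 2) := h.symm

theorem cantor_integers_eventually_strictly_decreasing_digits (m : ℕ) (hm : 1 ≤ m)
    (f : ℕ → ℕ) (hf : ∀ i j, i < j → j ≤ m → f i < f j) (hf0 : f 0 = 0) (hfm : m < f m)
    (α : ℝ) (hα : α = Real.log (f m + 1) / Real.log (m + 1)) :
    ∃ k₁ : ℕ, ∀ n : ℕ, (m + 1) ^ k₁ ≤ n →
      ∀ ε₁ ε₂ : ℕ, ε₁ < ε₂ → ε₂ ≤ m →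
        (cantorC m f ((m + 1) * n + ε₂) : ℝ) / (((m + 1) * n + ε₂ : ℕ) : ℝ) ^ α <
          (cantorC m f ((m + 1) * n + ε₁) : ℝ) / (((m + 1) * n + ε₁ : ℕ) : ℝ) ^ α := by
  have hfpos : ∀ i, 1 ≤ i → i ≤ m → 0 < f i := by
    intro i h1 h2
    have := hf 0 i h1 h2
    omega
  have hfmono : ∀ i j, i ≤ j → j ≤ m → f i ≤ f j := by
    intro i j h hj
    rcases Nat.lt_or_ge i j with h' | h'
    · exact (hf i j h' hj).le
    · have : i = j := le_antisymm h h'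
      exact le_of_eq (congrArg f this)
  refine ⟨f m * (m + 1) * (m + 1), ?_⟩
  intro n hn ε₁ ε₂ h12 h2m
  set k₁ := f m * (m + 1) * (m + 1) with hk₁
  have hn1 : 1 ≤ n := le_trans (Nat.one_le_pow _ _ (by omega)) hn
  -- key natural number inequality
  set k := Nat.log (m + 1) n with hk
  have hkk : k₁ ≤ k := by
    rw [hk]
    exact (Nat.le_log_iff_pow_le (by omega) (by omega)).mpr hn
  have hnlt : n < (m + 1) ^ (k + 1) := Nat.lt_pow_succ_log_self (by omega) n
  have hnge : (m + 1) ^ k ≤ n := Nat.pow_log_le_self _ (by omega)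
  have hClow : (f m + 1) ^ k ≤ cantorC m f n := cantorC_ge m (by omega : 1 < m + 1) f hfpos k n hnge
  have hkey : f m * ((m + 1) * n + m) < (f m + 1) * cantorC m f n := by
    have h1 : (m + 1) * n + m < (m + 1) ^ (k + 2) := by
      calc (m + 1) * n + m < (m + 1) * n + (m + 1) := by omega
        _ = (m + 1) * (n + 1) := by ring
        _ ≤ (m + 1) * (m + 1) ^ (k + 1) := Nat.mul_le_mul_left _ (by omega)
        _ = (m + 1) ^ (k + 2) := by ring
    have h2 : f m * (m + 1) ^ (k + 2) ≤ (f m + 1) * cantorC m f n := by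
      calc f m * (m + 1) ^ (k + 2) = f m * (m + 1) * (m + 1) * (m + 1) ^ k := by ring
        _ ≤ (k₁ + 1) * (m + 1) ^ k + (m + 1) ^ (k + 1) := by
            rw [hk₁, add_mul, one_mul]
            omega
        _ ≤ (k + 1) * (m + 1) ^ k + (m + 1) ^ (k + 1) :=
            Nat.add_le_add_right (Nat.mul_le_mul_right _ (by omega : k₁ + 1 ≤ k + 1)) _
        _ ≤ (m + 1 + 1) ^ (k + 1) := by have := binom_aux (m + 1) k; omega
        _ ≤ (f m + 1) ^ (k + 1) := Nat.pow_le_pow_left (by omega) _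
        _ = (f m + 1) ^ k * (f m + 1) := pow_succ _ _
        _ ≤ cantorC m f n * (f m + 1) := Nat.mul_le_mul_right _ hClow
        _ = (f m + 1) * cantorC m f n := Nat.mul_comm _ _
    calc f m * ((m + 1) * n + m) < f m * (m + 1) ^ (k + 2) :=
          Nat.mul_lt_mul_of_le_of_lt (le_refl (f m)) h1 (by omega)
      _ ≤ (f m + 1) * cantorC m f n := h2
  -- recurrence
  have hε1m : ε₁ ≤ m := by omega
  have hC1 := cantorC_step m (by omega : 1 < m + 1) f n ε₁ (by omega) hε1m
  have hC2 := cantorC_step m (by omega : 1 < m + 1) f n ε₂ (by omega) h2m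
  -- pure nat inequality for the final step
  have hnat : (f ε₂ - f ε₁) * ((m + 1) * n + ε₁) < (f ε₁ + (f m + 1) * cantorC m f n) * (ε₂ - ε₁) := by
    have hle : f ε₂ - f ε₁ ≤ f m := le_trans (Nat.sub_le _ _) (hfmono ε₂ m h2m le_rfl)
    calc (f ε₂ - f ε₁) * ((m + 1) * n + ε₁) ≤ f m * ((m + 1) * n + m) :=
          Nat.mul_le_mul hle (by omega)
      _ < (f m + 1) * cantorC m f n := hkey
      _ ≤ (f ε₁ + (f m + 1) * cantorC m f n) * 1 := by omega
      _ ≤ (f ε₁ + (f m + 1) * cantorC m f n) * (ε₂ - ε₁) := Nat.mul_le_mul_left _ (by omega)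
  -- real setup
  have hα1 : 1 ≤ α := by
    rw [hα]
    have hlogB : 0 < Real.log (m + 1) := by
      apply Real.log_pos
      have h1m : (1 : ℝ) ≤ (m : ℝ) := by exact_mod_cast hm
      linarith
    have hlt : Real.log ((m : ℝ) + 1) ≤ Real.log ((f m : ℝ) + 1) := by
      apply Real.log_le_log (by positivity)
      have : (m : ℝ) < f m := by exact_mod_cast hfm
      linarith
    rw [le_div_iff₀ hlogB]
    linarith
  set N₁ : ℝ := (((m + 1) * n + ε₁ : ℕ) : ℝ) with hN1def
  set N₂ : ℝ := (((m + 1) * n + ε₂ : ℕ) : ℝ) with hN2def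
  have hN1pos : (0 : ℝ) < N₁ := by
    rw [hN1def]
    have : 0 < (m + 1) * n + ε₁ := Nat.add_pos_left (Nat.mul_pos (by omega) (by omega)) _
    exact_mod_cast this
  have hN2pos : (0 : ℝ) < N₂ := by
    rw [hN2def]
    have : 0 < (m + 1) * n + ε₂ := Nat.add_pos_left (Nat.mul_pos (by omega) (by omega)) _
    exact_mod_cast this
  have hN12 : N₂ = N₁ + ((ε₂ : ℝ) - ε₁) := by rw [hN1def, hN2def]; push_cast; ring
  set x : ℝ := ((ε₂ : ℝ) - ε₁) / N₁ with hxdef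
  have hx0 : 0 < x := by
    apply div_pos _ hN1pos
    have : (ε₁ : ℝ) < ε₂ := by exact_mod_cast h12
    linarith
  have hN2eq : N₂ = N₁ * (1 + x) := by
    rw [hN12, hxdef]; field_simp
  rw [div_lt_div_iff₀ (Real.rpow_pos_of_pos hN2pos α) (Real.rpow_pos_of_pos hN1pos α)]
  have hrpow2 : N₂ ^ α = N₁ ^ α * (1 + x) ^ α := by
    rw [hN2eq, Real.mul_rpow hN1pos.le (by linarith)]
  have hbern : 1 + x ≤ (1 + x) ^ α := by
    nth_rewrite 1 [← Real.rpow_one (1 + x)]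
    exact Real.rpow_le_rpow_of_exponent_le (by linarith) hα1
  set C₁ : ℝ := ((cantorC m f ((m + 1) * n + ε₁) : ℕ) : ℝ) with hC1def
  set C₂ : ℝ := ((cantorC m f ((m + 1) * n + ε₂) : ℕ) : ℝ) with hC2def
  have hC1pos : 0 < C₁ := by
    rw [hC1def]
    exact_mod_cast cantorC_pos m (by omega : 1 < m + 1) f hfpos _ (Nat.add_pos_left (Nat.mul_pos (by omega) (by omega)) _)
  -- main step: C₂ < C₁ * (1 + x)
  have hmain : C₂ < C₁ * (1 + x) := by
    have hreal : (C₂ - C₁) * N₁ < C₁ * ((ε₂ : ℝ) - ε₁) := by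
      have hcast : C₂ - C₁ = ((f ε₂ : ℝ) - f ε₁) := by
        rw [hC1def, hC2def, hC1, hC2]; push_cast; ring
      rw [hcast, hC1def, hC1, hN1def]
      have hflt : f ε₁ < f ε₂ := hf ε₁ ε₂ h12 h2m
      have := hnat
      have hcastineq : ((f ε₂ - f ε₁ : ℕ) : ℝ) * (((m + 1) * n + ε₁ : ℕ) : ℝ) <
          ((f ε₁ + (f m + 1) * cantorC m f n : ℕ) : ℝ) * ((ε₂ - ε₁ : ℕ) : ℝ) := by
        exact_mod_cast hnat
      push_cast [Nat.cast_sub hflt.le, Nat.cast_sub h12.le] at hcastineq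
      push_cast
      linarith
    have hx' : C₂ - C₁ < C₁ * x := by
      rw [hxdef, mul_div_assoc']
      rw [lt_div_iff₀ hN1pos]
      linarith
    linarith
  calc C₂ * N₁ ^ α < (C₁ * (1 + x)) * N₁ ^ α := by
        apply mul_lt_mul_of_pos_right hmain (Real.rpow_pos_of_pos hN1pos α)
    _ = C₁ * (N₁ ^ α * (1 + x)) := by ring
    _ ≤ C₁ * (N₁ ^ α * (1 + x) ^ α) := by
        apply mul_le_mul_of_nonneg_left _ hC1pos.le
        exact mul_le_mul_of_nonneg_left hbern (Real.rpow_nonneg hN1pos.le α)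
    _ = C₁ * N₂ ^ α := by rw [hrpow2]
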